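/- Let F be a field. If v ∈ F² ⊗ F² ⊗ F² is a nonsingular tensor, then v has tensor rank at least 3. Equivalently, every tensor of rank at most 2 in F² ⊗ F² ⊗ F² is singular. -/

import Mathlib

open TensorProduct

variable (F : Type*) [Field F]

/-- Identification of `F² ⊗ F²` with `2 × 2` matrices. -/
noncomputable def toMat :
    ((Fin 2 → F) ⊗[F] (Fin 2 → F)) →ₗ[F] Matrix (Fin 2) (Fin 2) F :=
  TensorProduct.lift
    { toFun := fun x =>
        { toFun := fun y => Matrix.of fun i j => x i * y j
          map_add' := by intro y z; ext i j; simp only [LinearMap.coe_mk, AddHom.coe_mk, LinearMap.add_apply, LinearMap.smul_apply, Matrix.add_apply, Matrix.smul_apply, Matrix.of_apply, Pi.add_apply, Pi.smul_apply, smul_eq_mul, RingHom.id_apply]; ring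
          map_smul' := by intro c y; ext i j; simp only [LinearMap.coe_mk, AddHom.coe_mk, LinearMap.add_apply, LinearMap.smul_apply, Matrix.add_apply, Matrix.smul_apply, Matrix.of_apply, Pi.add_apply, Pi.smul_apply, smul_eq_mul, RingHom.id_apply]; ring }
      map_add' := by
        intro x x'; refine LinearMap.ext fun y => ?_; ext i j
        simp only [LinearMap.coe_mk, AddHom.coe_mk, LinearMap.add_apply, LinearMap.smul_apply, Matrix.add_apply, Matrix.smul_apply, Matrix.of_apply, Pi.add_apply, Pi.smul_apply, smul_eq_mul, RingHom.id_apply]; ring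
      map_smul' := by
        intro c x; refine LinearMap.ext fun y => ?_; ext i j
        simp only [LinearMap.coe_mk, AddHom.coe_mk, LinearMap.add_apply, LinearMap.smul_apply, Matrix.add_apply, Matrix.smul_apply, Matrix.of_apply, Pi.add_apply, Pi.smul_apply, smul_eq_mul, RingHom.id_apply]; ring }

/-- Contraction of `v ∈ F² ⊗ F² ⊗ F²` by a functional on the first factor. -/
noncomputable def con1 (w : (Fin 2 → F) →ₗ[F] F) :
    ((Fin 2 → F) ⊗[F] ((Fin 2 → F) ⊗[F] (Fin 2 → F))) →ₗ[F]
      ((Fin 2 → F) ⊗[F] (Fin 2 → F)) :=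
  (TensorProduct.lid F _).toLinearMap ∘ₗ TensorProduct.map w LinearMap.id

/-- Contraction of `v ∈ F² ⊗ F² ⊗ F²` by a functional on the second factor. -/
noncomputable def con2 (w : (Fin 2 → F) →ₗ[F] F) :
    ((Fin 2 → F) ⊗[F] ((Fin 2 → F) ⊗[F] (Fin 2 → F))) →ₗ[F]
      ((Fin 2 → F) ⊗[F] (Fin 2 → F)) :=
  TensorProduct.map LinearMap.id
    ((TensorProduct.lid F _).toLinearMap ∘ₗ TensorProduct.map w LinearMap.id)

/-- Contraction of `v ∈ F² ⊗ F² ⊗ F²` by a functional on the third factor. -/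
noncomputable def con3 (w : (Fin 2 → F) →ₗ[F] F) :
    ((Fin 2 → F) ⊗[F] ((Fin 2 → F) ⊗[F] (Fin 2 → F))) →ₗ[F]
      ((Fin 2 → F) ⊗[F] (Fin 2 → F)) :=
  TensorProduct.map LinearMap.id
    ((TensorProduct.rid F _).toLinearMap ∘ₗ TensorProduct.map LinearMap.id w)

/-- A tensor in `F² ⊗ F² ⊗ F²` is singular if some contraction by a nonzero
functional on one of the three factors is a singular `2 × 2` tensor. -/
def TensorSingular (v : (Fin 2 → F) ⊗[F] ((Fin 2 → F) ⊗[F] (Fin 2 → F))) : Prop :=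
  ∃ w : (Fin 2 → F) →ₗ[F] F, w ≠ 0 ∧
    ((toMat F (con1 F w v)).det = 0 ∨ (toMat F (con2 F w v)).det = 0 ∨
      (toMat F (con3 F w v)).det = 0)

/-- A tensor is nonsingular if all contractions by nonzero functionals are
invertible `2 × 2` tensors. -/
def TensorNonsingular (v : (Fin 2 → F) ⊗[F] ((Fin 2 → F) ⊗[F] (Fin 2 → F))) : Prop :=
  ∀ w : (Fin 2 → F) →ₗ[F] F, w ≠ 0 →
    IsUnit (toMat F (con1 F w v)) ∧ IsUnit (toMat F (con2 F w v)) ∧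
      IsUnit (toMat F (con3 F w v))

/-- The tensor rank: least number of pure tensors needed. -/
noncomputable def tensorRank (v : (Fin 2 → F) ⊗[F] ((Fin 2 → F) ⊗[F] (Fin 2 → F))) : ℕ :=
  sInf {k | ∃ f g h : Fin k → (Fin 2 → F),
    v = ∑ i, f i ⊗ₜ[F] (g i ⊗ₜ[F] h i)}

section Aux

variable {F}

lemma exists_ann (a : Fin 2 → F) :
    ∃ w : (Fin 2 → F) →ₗ[F] F, w ≠ 0 ∧ w a = 0 := by
  by_cases ha : a = 0
  · refine ⟨LinearMap.proj 0, ?_, by simp [ha]⟩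
    intro h
    have := congrArg (fun f : (Fin 2 → F) →ₗ[F] F => f (fun _ => 1)) h
    simp at this
  · refine ⟨a 1 • LinearMap.proj 0 - a 0 • LinearMap.proj 1, ?_, by simp [mul_comm]⟩
    intro h
    have h0 := congrArg (fun f : (Fin 2 → F) →ₗ[F] F => f (Pi.single 0 1)) h
    have h1 := congrArg (fun f : (Fin 2 → F) →ₗ[F] F => f (Pi.single 1 1)) h
    simp [Pi.single_apply] at h0 h1
    exact ha (funext fun i => by fin_cases i <;> simp [h0, h1])

lemma toMat_tmul (y z : Fin 2 → F) :
    toMat F (y ⊗ₜ[F] z) = Matrix.of fun i j => y i * z j := by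
  simp [toMat]

lemma det_toMat_tmul (y z : Fin 2 → F) : (toMat F (y ⊗ₜ[F] z)).det = 0 := by
  rw [toMat_tmul, Matrix.det_fin_two]
  simp
  ring

lemma con1_tmul (w : (Fin 2 → F) →ₗ[F] F) (a : Fin 2 → F)
    (t : (Fin 2 → F) ⊗[F] (Fin 2 → F)) :
    con1 F w (a ⊗ₜ[F] t) = w a • t := by
  simp [con1]

/-- every tensor is a finite sum of pure tensors -/
lemma exists_decomp (v : (Fin 2 → F) ⊗[F] ((Fin 2 → F) ⊗[F] (Fin 2 → F))) :
    ∃ k, ∃ f g h : Fin k → (Fin 2 → F),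
      v = ∑ i, f i ⊗ₜ[F] (g i ⊗ₜ[F] h i) := by
  classical
  set B := Pi.basisFun F (Fin 2)
  set b := Module.Basis.tensorProduct B (Module.Basis.tensorProduct B B) with hb
  set e := Fintype.equivFin (Fin 2 × Fin 2 × Fin 2) with he
  refine ⟨Fintype.card (Fin 2 × Fin 2 × Fin 2),
    fun i => (b.repr v (e.symm i)) • B (e.symm i).1,
    fun i => B (e.symm i).2.1, fun i => B (e.symm i).2.2, ?_⟩
  have key : ∀ j : Fin 2 × Fin 2 × Fin 2,
      (b.repr v j • B j.1) ⊗ₜ[F] (B j.2.1 ⊗ₜ[F] B j.2.2) = b.repr v j • b j := by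
    intro j
    rw [hb, Module.Basis.tensorProduct_apply, Module.Basis.tensorProduct_apply, smul_tmul']
  calc v = ∑ j, b.repr v j • b j := (b.sum_repr v).symm
    _ = ∑ j, (b.repr v j • B j.1) ⊗ₜ[F] (B j.2.1 ⊗ₜ[F] B j.2.2) := by
        simp_rw [key]
    _ = ∑ i, (b.repr v (e.symm i) • B (e.symm i).1) ⊗ₜ[F]
          (B (e.symm i).2.1 ⊗ₜ[F] B (e.symm i).2.2) :=
        (Equiv.sum_comp e.symm _).symm

lemma rank_ge (v : (Fin 2 → F) ⊗[F] ((Fin 2 → F) ⊗[F] (Fin 2 → F)))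
    (hv : TensorNonsingular F v) (k : ℕ) (f g h : Fin k → (Fin 2 → F))
    (hvk : v = ∑ i, f i ⊗ₜ[F] (g i ⊗ₜ[F] h i)) : 3 ≤ k := by
  by_contra hk
  push_neg at hk
  -- pick w annihilating f 0 if k ≥ 1; otherwise any nonzero w
  interval_cases k
  · -- k = 0
    obtain ⟨w, hw, -⟩ := exists_ann (0 : Fin 2 → F)
    have hu := (hv w hw).1
    rw [hvk, Fin.sum_univ_zero, LinearMap.map_zero, LinearMap.map_zero] at hu
    have := (Matrix.isUnit_iff_isUnit_det _).mp hu
    simp at this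
  · -- k = 1
    obtain ⟨w, hw, hwa⟩ := exists_ann (f 0)
    have hu := (hv w hw).1
    rw [hvk] at hu
    rw [Fin.sum_univ_one, con1_tmul, hwa, zero_smul] at hu
    have := (Matrix.isUnit_iff_isUnit_det _).mp hu
    simp at this
  · -- k = 2
    obtain ⟨w, hw, hwa⟩ := exists_ann (f 0)
    have hu := (hv w hw).1
    rw [hvk, map_sum] at hu
    rw [Fin.sum_univ_two, con1_tmul, con1_tmul, hwa, zero_smul, zero_add] at hu
    have hdet := (Matrix.isUnit_iff_isUnit_det _).mp hu
    rw [map_smul, Matrix.det_smul, det_toMat_tmul, mul_zero] at hdet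
    simp at hdet

end Aux

/-- A nonsingular tensor in `F² ⊗ F² ⊗ F²` has tensor rank at least `3`;
equivalently every tensor of rank at most `2` is singular. -/
theorem stmt13 (F : Type*) [Field F]
    (v : (Fin 2 → F) ⊗[F] ((Fin 2 → F) ⊗[F] (Fin 2 → F)))
    (hv : TensorNonsingular F v) :
    3 ≤ tensorRank F v := by
  obtain ⟨k, f, g, h, hd⟩ := exists_decomp v
  have hne : {k | ∃ f g h : Fin k → (Fin 2 → F),
      v = ∑ i, f i ⊗ₜ[F] (g i ⊗ₜ[F] h i)}.Nonempty := ⟨k, f, g, h, hd⟩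
  obtain ⟨f', g', h', hd'⟩ := Nat.sInf_mem hne
  exact rank_ge v hv _ f' g' h' hd'
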